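/- Write d = kc + r with 0 < r ≤ c (so k = ⌊(d−1)/c⌋). The set of minimal generators of I_{c,(n,d,t)}, partially ordered so that u covers v whenever v = x_i(u/x_j) for some i < j with x_j | u, has a unique maximal element x_{a_1}⋯x_{a_d} with a_{d−i+1} = n − (i−1)t − ⌊(i−1)/c⌋ for i = 1,...,d, and a unique minimal element x_{α_1}⋯x_{α_d} with α_i = (i−1)t + ⌊(i−1)/c⌋ + 1 for i = 1,...,d. -/

import Mathlib

/-- A list (representing a weakly increasing multiset) is `t`-spread if
successive entries differ by at least `t`. -/
def TSpread (t : ℕ) (A : List ℕ) : Prop :=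
  A.Chain' (fun a b => a + t ≤ b)

/-- A block (for the parameter `t`) is a nonempty run whose successive
differences are exactly `t`. -/
def IsBlock (t : ℕ) (B : List ℕ) : Prop :=
  B ≠ [] ∧ B.Chain' (fun a b => b = a + t)

/-- `Bs` is the decomposition of `A` into maximal blocks. -/
def IsBlockDecomp (t : ℕ) (A : List ℕ) (Bs : List (List ℕ)) : Prop :=
  A = Bs.flatten ∧ (∀ B ∈ Bs, IsBlock t B) ∧
    Bs.Chain' (fun B C => ∀ x ∈ B.getLast?, ∀ y ∈ C.head?, x + t < y)

/-- `A` is `c`-bounded: every block of its (unique) maximal block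
decomposition has size at most `c`. -/
def CBounded (c t : ℕ) (A : List ℕ) : Prop :=
  ∀ Bs, IsBlockDecomp t A Bs → ∀ B ∈ Bs, B.length ≤ c

/-- The set of (sorted index lists of) minimal monomial generators of the
`c`-bounded `t`-spread Veronese ideal `I_{c,(n,d,t)}`. -/
def Gen (c n d t : ℕ) : Set (List ℕ) :=
  {A | A.length = d ∧ TSpread t A ∧ CBounded c t A ∧ ∀ i ∈ A, 1 ≤ i ∧ i ≤ n}


/-- Generators of `I_{c,(n,d,t)}` as multisets of indices. -/
def GenM (c n d t : ℕ) : Set (Multiset ℕ) :=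
  {m | m.sort (· ≤ ·) ∈ Gen c n d t}

/-- `u` covers `v` in the partial order on generators of `I_{c,(n,d,t)}`:
there are `i < j` with `x_j ∣ u` and `v = x_i · u / x_j`. -/
def Covers (c n d t : ℕ) (v u : Multiset ℕ) : Prop :=
  v ∈ GenM c n d t ∧ u ∈ GenM c n d t ∧
    ∃ i j, i < j ∧ j ∈ u ∧ v = i ::ₘ u.erase j

namespace S9

/-- safe indexing -/
def D (A : List ℕ) (i : ℕ) : ℕ := A.getD i 0

lemma D_get {A : List ℕ} {i : ℕ} (h : i < A.length) : D A i = A[i] :=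
  List.getD_eq_getElem A 0 h

lemma chain'_iff_D {R : ℕ → ℕ → Prop} {A : List ℕ} :
    A.Chain' R ↔ ∀ i, i + 1 < A.length → R (D A i) (D A (i+1)) := by
  rw [List.Chain', List.isChain_iff_getElem]
  constructor
  · intro h i hi
    rw [D_get (by omega), D_get hi]
    simpa [List.get_eq_getElem] using h i (by omega)
  · intro h i hi
    have := h i (by omega)
    rw [D_get (by omega), D_get (by omega)] at this
    simpa [List.get_eq_getElem] using this

lemma D_lt (P : List ℕ) {i : ℕ} (h : i < P.length) (x : ℕ) (Q : List ℕ) :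
    D (P ++ x :: Q) i = D P i := by
  rw [D_get (by simp; omega), D_get h, List.getElem_append, dif_pos h]

lemma D_eq (P : List ℕ) (x : ℕ) (Q : List ℕ) : D (P ++ x :: Q) P.length = x := by
  rw [D_get (by simp), List.getElem_append, dif_neg (by omega)]
  simp

lemma D_gt (P : List ℕ) {i : ℕ} (h : P.length < i) (x : ℕ) (Q : List ℕ) :
    D (P ++ x :: Q) i = D Q (i - P.length - 1) := by
  rcases Nat.exists_eq_add_of_lt h with ⟨j, rfl⟩
  by_cases hj : j < Q.length
  · have e1 : P.length + j + 1 - P.length - 1 = j := by omega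
    rw [e1, D_get (A := Q) hj, D_get (by simp; omega), List.getElem_append,
      dif_neg (by omega)]
    have e2 : P.length + j + 1 - P.length = j + 1 := by omega
    simp_rw [e2]
    simp
  · simp only [D]
    rw [List.getD_eq_default _ _ (by simp; omega), List.getD_eq_default _ _ (by omega)]

lemma D_take (L : List ℕ) {i p : ℕ} (h : i < p) (h2 : p ≤ L.length) :
    D (L.take p) i = D L i := by
  rw [D_get (by simp; omega), D_get (by omega), List.getElem_take]

lemma D_drop (L : List ℕ) {j p : ℕ} (h : p + j < L.length) :
    D (L.drop p) j = D L (p + j) := by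
  rw [D_get (by simp; omega), D_get h, List.getElem_drop]

lemma mem_of_D {L : List ℕ} {i : ℕ} (h : i < L.length) : D L i ∈ L := by
  rw [D_get h]; exact List.getElem_mem _

lemma ext_D {L M : List ℕ} (h : L.length = M.length)
    (h2 : ∀ i, i < L.length → D L i = D M i) : L = M := by
  apply List.ext_getElem h
  intro i h1 h1'
  have := h2 i h1
  rwa [D_get h1, D_get h1'] at this

/-- Index-form of the no-long-run condition. -/
def NoRunIdx (c t : ℕ) (A : List ℕ) : Prop :=
  ∀ p, p + c < A.length → ∃ q < c, D A (p+q+1) ≠ D A (p+q) + t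

lemma infix_idx {l A : List ℕ} (h : l <:+: A) :
    ∃ i, i + l.length ≤ A.length ∧ ∀ j, j < l.length → D l j = D A (i + j) := by
  obtain ⟨P, Q, rfl⟩ := h
  refine ⟨P.length, by simp only [List.length_append]; omega, fun j hj => ?_⟩
  rw [D_get hj, D_get (by simp only [List.length_append]; omega)]
  rw [List.getElem_append, dif_pos (by simp only [List.length_append]; omega)]
  rw [List.getElem_append, dif_neg (by omega)]
  congr 1
  omega

lemma noRun_of_idx {c t : ℕ} {A : List ℕ} (h : NoRunIdx c t A) :
    ∀ l, l <:+: A → l.Chain' (fun a b => b = a + t) → l.length ≤ c := by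
  intro l hl hch
  by_contra hlen
  push_neg at hlen
  obtain ⟨i, hle, hD⟩ := infix_idx hl
  obtain ⟨q, hq, hne⟩ := h i (by omega)
  apply hne
  have := chain'_iff_D.mp hch q (by omega)
  rw [hD q (by omega), hD (q+1) (by omega)] at this
  rw [show i + q + 1 = i + (q+1) by omega]
  exact this

lemma take_drop_infix (A : List ℕ) (p m : ℕ) : (A.drop p).take m <:+: A := by
  refine ⟨A.take p, (A.drop p).drop m, ?_⟩
  rw [List.append_assoc, List.take_append_drop, List.take_append_drop]

lemma idx_of_noRun {c t : ℕ} {A : List ℕ}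
    (h : ∀ l, l <:+: A → l.Chain' (fun a b => b = a + t) → l.length ≤ c) :
    NoRunIdx c t A := by
  intro p hp
  by_contra hq
  push_neg at hq
  set l := (A.drop p).take (c+1) with hl
  have hlen : l.length = c + 1 := by simp [hl]; omega
  have hDl : ∀ j, j < c + 1 → D l j = D A (p + j) := by
    intro j hj
    rw [hl, D_take _ (by omega) (by simp; omega), D_drop _ (by omega)]
  have hch : l.Chain' (fun a b => b = a + t) := by
    rw [chain'_iff_D]
    intro i hi
    rw [hlen] at hi
    rw [hDl i (by omega), hDl (i+1) (by omega), show p + (i+1) = p + i + 1 by omega]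
    exact hq i (by omega)
  have := h l (take_drop_infix A p (c+1)) hch
  omega

lemma cBounded_of_idx {c t : ℕ} {A : List ℕ} (h : NoRunIdx c t A) : CBounded c t A := by
  intro Bs ⟨hflat, hblocks, _⟩ B hB
  exact noRun_of_idx h B (hflat ▸ List.infix_of_mem_flatten hB) (hblocks B hB).2

/-- canonical decomposition into maximal runs -/
def runs (t : ℕ) : List ℕ → List (List ℕ)
  | [] => []
  | a :: l =>
    match runs t l with
    | [] => [[a]]
    | B :: Bs => if B.head? = some (a + t) then (a :: B) :: Bs else [a] :: B :: Bs

lemma runs_head (t a : ℕ) (l : List ℕ) :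
    ∃ B Bs, runs t (a :: l) = B :: Bs ∧ B.head? = some a := by
  rw [runs]
  rcases hr : runs t l with _ | ⟨B, Bs⟩
  · exact ⟨[a], [], rfl, rfl⟩
  · by_cases hh : B.head? = some (a + t)
    · exact ⟨a :: B, Bs, by simp [hh], rfl⟩
    · exact ⟨[a], B :: Bs, by simp [hh], rfl⟩

lemma runs_ne_nil (t : ℕ) : ∀ l B, B ∈ runs t l → B ≠ []
  | [], B => by simp [runs]
  | a :: l, B => by
    intro hB
    rw [runs] at hB
    rcases hr : runs t l with _ | ⟨B', Bs⟩ <;> rw [hr] at hB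
    · simp at hB; simp [hB]
    · by_cases hh : B'.head? = some (a + t) <;> simp [hh] at hB
      · rcases hB with h | h
        · simp [h]
        · exact runs_ne_nil t l B (by rw [hr]; simp [h])
      · rcases hB with h | h | h
        · simp [h]
        · exact runs_ne_nil t l B (by rw [hr]; simp [h])
        · exact runs_ne_nil t l B (by rw [hr]; simp [h])

lemma runs_flatten (t : ℕ) : ∀ l, (runs t l).flatten = l
  | [] => rfl
  | a :: l => by
    rw [runs]
    rcases hr : runs t l with _ | ⟨B, Bs⟩
    · have := runs_flatten t l; rw [hr] at this; simp at this; simp [this]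
    · have := runs_flatten t l; rw [hr] at this
      by_cases hh : B.head? = some (a + t) <;> simp [hh] <;> simp at this <;>
        simp [this]

lemma runs_blocks {t : ℕ} : ∀ {l : List ℕ}, TSpread t l → ∀ B ∈ runs t l, IsBlock t B
  | [] => by simp [runs]
  | a :: l => by
    intro hts B hB
    have htl : TSpread t l := hts.tail
    rw [runs] at hB
    rcases hr : runs t l with _ | ⟨B', Bs⟩ <;> rw [hr] at hB
    · simp at hB
      exact hB ▸ ⟨by simp, by simp [List.Chain']⟩
    · have hblocks := fun C hC => runs_blocks htl C (hr ▸ hC)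
      by_cases hh : B'.head? = some (a + t) <;> simp [hh] at hB
      · rcases hB with h | h
        · subst h
          have hB' : IsBlock t B' := hblocks B' (by simp)
          refine ⟨by simp, ?_⟩
          rw [List.Chain', List.isChain_cons]
          exact ⟨fun y hy => by rw [hh] at hy; simpa using hy.symm, hB'.2⟩
        · exact hblocks B (by simp [h])
      · rcases hB with h | h | h
        · exact h ▸ ⟨by simp, by simp [List.Chain']⟩
        · exact hblocks B (by simp [h])
        · exact hblocks B (by simp [h])

lemma runs_gapchain {t : ℕ} : ∀ {l : List ℕ}, TSpread t l →
    (runs t l).Chain' (fun B C => ∀ x ∈ B.getLast?, ∀ y ∈ C.head?, x + t < y)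
  | [] => by simp [runs, List.Chain']
  | a :: l => by
    intro hts
    have htl : TSpread t l := hts.tail
    have IH := runs_gapchain htl
    rw [runs]
    rcases hr : runs t l with _ | ⟨B', Bs⟩ <;> rw [hr] at IH
    · simp [List.Chain']
    · have hne : B' ≠ [] := runs_ne_nil t l B' (hr ▸ by simp)
      by_cases hh : B'.head? = some (a + t) <;> simp only [hh, if_pos, if_neg, reduceIte]
      · rw [List.Chain', List.isChain_cons] at IH ⊢
        refine ⟨?_, IH.2⟩
        intro C hC x hx
        apply IH.1 C hC
        rcases B' with _ | ⟨b0, B''⟩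
        · exact absurd rfl hne
        · rwa [List.getLast?_cons_cons] at hx
      · rw [List.Chain', List.isChain_cons]
        refine ⟨?_, IH⟩
        intro C hC x hx y hy
        simp at hC
        subst hC
        simp at hx
        subst hx
        rcases l with _ | ⟨b, l'⟩
        · rw [runs] at hr; simp at hr
        · obtain ⟨B0, Bs0, hB0, hB0h⟩ := runs_head t b l'
          rw [hr] at hB0
          injection hB0 with h1 h2
          subst h1
          rw [hB0h] at hy
          simp at hy
          subst hy
          have hab : a + t ≤ b := (List.isChain_cons_cons.mp hts).1
          have : b ≠ a + t := by
            intro hb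
            apply hh
            rw [hB0h, hb]
          omega

lemma runs_decomp {t : ℕ} {A : List ℕ} (h : TSpread t A) :
    IsBlockDecomp t A (runs t A) :=
  ⟨(runs_flatten t A).symm, fun B hB => runs_blocks h B hB, runs_gapchain h⟩

lemma runs_mono {t a : ℕ} {l : List ℕ} :
    ∀ B ∈ runs t l, ∃ B' ∈ runs t (a :: l), B.length ≤ B'.length := by
  intro B hB
  rcases hr : runs t l with _ | ⟨C, Cs⟩ <;> rw [hr] at hB
  · simp at hB
  · have hrw : runs t (a :: l) =
        if C.head? = some (a + t) then (a :: C) :: Cs else [a] :: C :: Cs := by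
      rw [runs, hr]
    rw [hrw]
    rcases List.mem_cons.mp hB with rfl | h
    · by_cases hh : B.head? = some (a + t)
      · rw [if_pos hh]; exact ⟨a :: B, by simp, by simp⟩
      · rw [if_neg hh]; exact ⟨B, by simp, le_refl _⟩
    · by_cases hh : C.head? = some (a + t)
      · rw [if_pos hh]; exact ⟨B, by simp [h], le_refl _⟩
      · rw [if_neg hh]; exact ⟨B, by simp [h], le_refl _⟩

lemma prefix_run {t : ℕ} : ∀ {l A : List ℕ}, l <+: A → l ≠ [] →
    l.Chain' (fun a b => b = a + t) →
    ∃ B Bs, runs t A = B :: Bs ∧ l.length ≤ B.length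
  | [], _, _, hne, _ => absurd rfl hne
  | x :: l', A, hpre, _, hch => by
    rcases A with _ | ⟨a, A'⟩
    · simp at hpre
    · obtain ⟨rfl, hl'⟩ := List.cons_prefix_cons.mp hpre
      rcases l' with _ | ⟨y, l''⟩
      · obtain ⟨B, Bs, hB, hBh⟩ := runs_head t x A'
        refine ⟨B, Bs, hB, ?_⟩
        have : B ≠ [] := runs_ne_nil t (x :: A') B (hB ▸ by simp)
        simp
        exact List.length_pos_iff.mpr this
      · have hy : y = x + t := (List.isChain_cons_cons.mp hch).1
        rcases A' with _ | ⟨b, A''⟩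
        · simp at hl'
        · obtain ⟨rfl, _⟩ := List.cons_prefix_cons.mp hl'
          obtain ⟨B, Bs, hB, hle⟩ := prefix_run hl' (by simp) (List.isChain_cons_cons.mp hch).2
          obtain ⟨B0, Bs0, hB0, hB0h⟩ := runs_head t y A''
          rw [hB] at hB0
          injection hB0 with h1 h2
          subst h1
          refine ⟨x :: B, Bs, ?_, by simp only [List.length_cons] at hle ⊢; omega⟩
          rw [runs, hB]
          simp [hB0h, hy]

lemma run_in_block {t : ℕ} : ∀ {A l : List ℕ}, l <:+: A → l ≠ [] →
    l.Chain' (fun a b => b = a + t) → ∃ B ∈ runs t A, l.length ≤ B.length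
  | [], l, hinf, hne, _ => by
    rw [List.infix_nil] at hinf
    exact absurd hinf hne
  | a :: A', l, hinf, hne, hch => by
    rcases List.infix_cons_iff.mp hinf with hpre | hinf'
    · obtain ⟨B, Bs, hB, hle⟩ := prefix_run hpre hne hch
      exact ⟨B, by rw [hB]; simp, hle⟩
    · obtain ⟨B, hB, hle⟩ := run_in_block hinf' hne hch
      obtain ⟨B', hB', hle'⟩ := runs_mono B hB
      exact ⟨B', hB', le_trans hle hle'⟩

lemma idx_of_cBounded {c t : ℕ} {A : List ℕ} (hts : TSpread t A) (hcb : CBounded c t A) :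
    NoRunIdx c t A := by
  apply idx_of_noRun
  intro l hl hch
  rcases eq_or_ne l [] with rfl | hne
  · simp
  · obtain ⟨B, hB, hle⟩ := run_in_block hl hne hch
    exact le_trans hle (hcb (runs t A) (runs_decomp hts) B hB)

/-! ### arithmetic helpers -/

def gfun (c t i : ℕ) : ℕ := i * t + i / c

lemma gfun_step {c t : ℕ} (i : ℕ) :
    gfun c t i + t ≤ gfun c t (i+1) ∧ gfun c t (i+1) ≤ gfun c t i + t + 1 := by
  unfold gfun
  have h := Nat.succ_div (a := i) (b := c)
  have h2 : i / c ≤ (i+1)/c := Nat.div_le_div_right (by omega)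
  have h3 : (i+1) * t = i * t + t := by ring
  split_ifs at h <;> omega

lemma gfun_exact {c t : ℕ} (hc : 1 ≤ c) (i : ℕ) :
    gfun c t (i+1) = gfun c t i + t ↔ ¬ c ∣ (i+1) := by
  unfold gfun
  have h := Nat.succ_div (a := i) (b := c)
  have h3 : (i+1) * t = i * t + t := by ring
  constructor
  · intro he hdvd
    rw [if_pos hdvd] at h
    omega
  · intro hnd
    rw [if_neg hnd] at h
    omega

lemma gfun_exact' {c t : ℕ} (hc : 1 ≤ c) {i : ℕ} (h : c ∣ (i+1)) :
    gfun c t (i+1) = gfun c t i + t + 1 := by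
  unfold gfun
  have h2 := Nat.succ_div (a := i) (b := c)
  rw [if_pos h] at h2
  have h3 : (i+1) * t = i * t + t := by ring
  omega

lemma gfun_mono {c t : ℕ} {i j : ℕ} (h : i ≤ j) : gfun c t i ≤ gfun c t j :=
  Nat.add_le_add (Nat.mul_le_mul_right t h) (Nat.div_le_div_right h)

lemma gfun_add_c {c t : ℕ} (hc : 1 ≤ c) (i : ℕ) :
    gfun c t (i + c) = gfun c t i + (c * t + 1) := by
  unfold gfun
  rw [Nat.add_div_right i hc]
  have : (i + c) * t = i * t + c * t := by ring
  omega

/-- among `q < c`, some `i + q + 1` is divisible by `c` -/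
lemma exists_dvd_window {c : ℕ} (hc : 1 ≤ c) (i : ℕ) :
    ∃ q < c, c ∣ (i + q + 1) := by
  refine ⟨c - 1 - i % c, by have := Nat.mod_lt i hc; omega, ⟨i / c + 1, ?_⟩⟩
  have h1 : c * (i / c) + i % c = i := Nat.div_add_mod i c
  have h2 : i % c < c := Nat.mod_lt i hc
  have h3 : c * (i / c + 1) = c * (i / c) + c := by ring
  omega

/-! ### quantitative consequences of TSpread + NoRunIdx -/

lemma tspread_D {t : ℕ} {A : List ℕ} (h : TSpread t A) {i : ℕ} (hi : i + 1 < A.length) :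
    D A i + t ≤ D A (i+1) := chain'_iff_D.mp h i hi

lemma gaps_lin {t : ℕ} {A : List ℕ} (h : TSpread t A) :
    ∀ s p, p + s < A.length → D A p + s * t ≤ D A (p + s) := by
  intro s
  induction s with
  | zero => simp
  | succ s ih =>
    intro p hp
    have h1 := ih p (by omega)
    have h2 := tspread_D h (i := p + s) (by omega)
    have h3 : (s+1) * t = s * t + t := by ring
    rw [show p + (s+1) = p + s + 1 by omega]
    omega

lemma jump {c t : ℕ} {A : List ℕ} (hts : TSpread t A) (hnr : NoRunIdx c t A)
    {p : ℕ} (hp : p + c < A.length) : D A p + (c * t + 1) ≤ D A (p + c) := by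
  obtain ⟨q, hq, hne⟩ := hnr p hp
  have h1 : D A (p+q) + t + 1 ≤ D A (p+q+1) := by
    have := tspread_D hts (i := p + q) (by omega)
    omega
  have h2 := gaps_lin hts q p (by omega)
  have h3 := gaps_lin hts (c - q - 1) (p + q + 1) (by omega)
  rw [show p + q + 1 + (c - q - 1) = p + c by omega] at h3
  have h4 : q * t + t + (c - q - 1) * t = c * t := by
    have : q + 1 + (c - q - 1) = c := by omega
    calc q * t + t + (c - q - 1) * t = (q + 1 + (c - q - 1)) * t := by ring
    _ = c * t := by rw [this]
  omega

lemma key_lb {c t : ℕ} {A : List ℕ} (hc : 1 ≤ c) (hts : TSpread t A) (hnr : NoRunIdx c t A) :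
    ∀ s p, p + s < A.length → D A p + gfun c t s ≤ D A (p + s) := by
  intro s
  induction s using Nat.strong_induction_on with
  | _ s ih =>
    match s with
    | 0 => intro p hp; simp [gfun]
    | s + 1 =>
      intro p hp
      by_cases hdvd : c ∣ (s + 1)
      · have hcs : c ≤ s + 1 := Nat.le_of_dvd (by omega) hdvd
        set m := s + 1 - c with hm
        have h1 := ih m (by omega) p (by omega)
        have h2 := jump hts hnr (p := p + m) (by omega : p + m + c < A.length)
        rw [show p + m + c = p + (s+1) by omega] at h2
        have h3 : gfun c t (s+1) = gfun c t m + (c * t + 1) := by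
          rw [show s + 1 = m + c by omega, gfun_add_c hc]
        omega
      · have h1 := ih s (by omega) p (by omega)
        have h2 := tspread_D hts (i := p + s) (by omega)
        have h3 : gfun c t (s+1) = gfun c t s + t := (gfun_exact hc s).mpr hdvd
        rw [show p + (s+1) = p + s + 1 by omega]
        omega

/-! ### the two extremal lists -/

def MLst (c n d t : ℕ) : List ℕ :=
  (List.range d).map fun i => n - (d - 1 - i) * t - (d - 1 - i) / c

def mlst (c d t : ℕ) : List ℕ :=
  (List.range d).map fun i => i * t + i / c + 1

lemma D_map_range {f : ℕ → ℕ} {d i : ℕ} (h : i < d) :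
    D ((List.range d).map f) i = f i := by
  rw [D_get (by simp [h])]
  simp

lemma MLst_length (c n d t : ℕ) : (MLst c n d t).length = d := by simp [MLst]

lemma mlst_length (c d t : ℕ) : (mlst c d t).length = d := by simp [mlst]

lemma D_MLst {c n d t i : ℕ} (hi : i < d) :
    D (MLst c n d t) i = n - gfun c t (d - 1 - i) := by
  rw [MLst, D_map_range hi, Nat.sub_sub, gfun]

lemma D_mlst {c d t i : ℕ} (hi : i < d) :
    D (mlst c d t) i = gfun c t i + 1 := by
  rw [mlst, D_map_range hi, gfun]

section Extremal

variable {c n d t : ℕ} (hc : 1 ≤ c) (hd : 1 ≤ d)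
variable (hgn : ∀ i, i ≤ d - 1 → gfun c t i + 1 ≤ n)

include hc hd hgn

lemma MLst_tspread : TSpread t (MLst c n d t) := by
  rw [TSpread, chain'_iff_D, MLst_length]
  intro i hi
  rw [D_MLst (by omega), D_MLst (by omega)]
  have e : d - 1 - i = (d - 1 - (i+1)) + 1 := by omega
  rw [e]
  have h1 := (gfun_step (c := c) (t := t) (d - 1 - (i+1))).1
  have h2 := hgn (d - 1 - (i+1) + 1) (by omega)
  omega

lemma MLst_noRunIdx : NoRunIdx c t (MLst c n d t) := by
  intro p hp
  rw [MLst_length] at hp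
  refine ⟨(d - 1 - p) % c, Nat.mod_lt _ hc, ?_⟩
  have hqx : (d - 1 - p) % c ≤ d - 1 - p := Nat.mod_le _ c
  have hq : (d - 1 - p) % c < c := Nat.mod_lt _ hc
  have hdm := Nat.div_add_mod (d - 1 - p) c
  have hdvd : c ∣ (d - 2 - p - (d - 1 - p) % c + 1) := by
    refine ⟨(d - 1 - p) / c, ?_⟩
    omega
  have hgx := gfun_exact' (t := t) hc hdvd
  have hb := hgn (d - 2 - p - (d - 1 - p) % c + 1) (by omega)
  rw [D_MLst (by omega), D_MLst (by omega),
    show d - 1 - (p + (d - 1 - p) % c + 1) = d - 2 - p - (d - 1 - p) % c by omega,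
    show d - 1 - (p + (d - 1 - p) % c) = d - 2 - p - (d - 1 - p) % c + 1 by omega]
  omega

lemma MLst_bounds : ∀ x ∈ MLst c n d t, 1 ≤ x ∧ x ≤ n := by
  intro x hx
  obtain ⟨i, hi, he⟩ := List.mem_iff_getElem.mp hx
  have hi' : i < d := by rw [MLst_length] at hi; exact hi
  rw [← he, ← D_get hi, D_MLst hi']
  have h := hgn (d - 1 - i) (by omega)
  simp only [gfun] at h ⊢
  have h2 : ∀ X : ℕ, X + 1 ≤ n → 1 ≤ n - X ∧ n - X ≤ n := fun X hX => by omega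
  exact h2 _ h

lemma MLst_mem : MLst c n d t ∈ Gen c n d t :=
  ⟨MLst_length c n d t, MLst_tspread hc hd hgn,
    cBounded_of_idx (MLst_noRunIdx hc hd hgn), MLst_bounds hc hd hgn⟩

lemma mlst_tspread : TSpread t (mlst c d t) := by
  rw [TSpread, chain'_iff_D, mlst_length]
  intro i hi
  rw [D_mlst (by omega), D_mlst (by omega)]
  have h1 := (gfun_step (c := c) (t := t) i).1
  omega

lemma mlst_noRunIdx : NoRunIdx c t (mlst c d t) := by
  intro p hp
  rw [mlst_length] at hp
  obtain ⟨q, hq, hdvd⟩ := exists_dvd_window hc p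
  refine ⟨q, hq, ?_⟩
  have hgx := gfun_exact' (t := t) hc hdvd
  rw [D_mlst (by omega), D_mlst (by omega)]
  omega

lemma mlst_bounds : ∀ x ∈ mlst c d t, 1 ≤ x ∧ x ≤ n := by
  intro x hx
  obtain ⟨i, hi, he⟩ := List.mem_iff_getElem.mp hx
  have hi' : i < d := by rw [mlst_length] at hi; exact hi
  rw [← he, ← D_get hi, D_mlst hi']
  have h := hgn i (by omega)
  simp only [gfun] at h ⊢
  exact ⟨Nat.le_add_left 1 _, by omega⟩

lemma mlst_mem : mlst c d t ∈ Gen c n d t :=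
  ⟨mlst_length c d t, mlst_tspread hc hd hgn,
    cBounded_of_idx (mlst_noRunIdx hc hd hgn), mlst_bounds hc hd hgn⟩

end Extremal

/-! ### multiset plumbing -/

lemma sorted_of_tspread {t : ℕ} {A : List ℕ} (h : TSpread t A) : A.Pairwise (· ≤ ·) := by
  rw [← List.isChain_iff_pairwise]
  exact h.imp (fun a b hab => by omega)

lemma coe_sort_eq {A : List ℕ} (h : A.Pairwise (· ≤ ·)) :
    Multiset.sort (↑A : Multiset ℕ) (· ≤ ·) = A :=
  List.Perm.eq_of_pairwise' (Multiset.pairwise_sort _ _) h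
    (Multiset.coe_eq_coe.mp (Multiset.sort_eq _ _))

lemma mem_genM_of_gen {c n d t : ℕ} {A : List ℕ} (h : A ∈ Gen c n d t) :
    (↑A : Multiset ℕ) ∈ GenM c n d t := by
  rw [GenM, Set.mem_setOf_eq, coe_sort_eq (sorted_of_tspread h.2.1)]
  exact h

lemma coe_mid (P Q : List ℕ) (x : ℕ) :
    (↑(P ++ x :: Q) : Multiset ℕ) = x ::ₘ ↑(P ++ Q) :=
  Multiset.coe_eq_coe.mpr List.perm_middle

lemma erase_mid (P Q : List ℕ) (x : ℕ) :
    (↑(P ++ x :: Q) : Multiset ℕ).erase x = ↑(P ++ Q) := by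
  rw [coe_mid, Multiset.erase_cons_head]

/-! ### gluing two generators at a cut point -/

lemma D_append_lt (P Q : List ℕ) {i : ℕ} (h : i < P.length) : D (P ++ Q) i = D P i := by
  rw [D_get (by simp only [List.length_append]; omega), D_get h,
    List.getElem_append, dif_pos h]

lemma D_append_ge (P Q : List ℕ) {i : ℕ} (h : P.length ≤ i) (h2 : i - P.length < Q.length) :
    D (P ++ Q) i = D Q (i - P.length) := by
  rw [D_get (by simp only [List.length_append]; omega), D_get h2,
    List.getElem_append, dif_neg (by omega)]

section Glue

variable {c n d t : ℕ} {A B : List ℕ} {s : ℕ}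
variable (hc : 1 ≤ c)
variable (hlA : A.length = d) (hlB : B.length = d) (hs : s ≤ d)
variable (htA : TSpread t A) (htB : TSpread t B)
variable (hnA : NoRunIdx c t A) (hnB : NoRunIdx c t B)
variable (hbd : 1 ≤ s → s < d → D A (s-1) + t < D B s)

include hlA hlB hs in
lemma glue_length : (A.take s ++ B.drop s).length = d := by
  simp only [List.length_append, List.length_take, List.length_drop]
  omega

include hlA hs in
lemma D_glue_lt {i : ℕ} (h : i < s) :
    D (A.take s ++ B.drop s) i = D A i := by
  rw [D_append_lt _ _ (by simp only [List.length_take]; omega), D_take _ h (by omega)]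

include hlA hlB hs in
lemma D_glue_ge {i : ℕ} (h : s ≤ i) (hi : i < d) :
    D (A.take s ++ B.drop s) i = D B i := by
  have hP : (A.take s).length = s := by simp only [List.length_take]; omega
  rw [D_append_ge _ _ (by omega) (by simp only [List.length_drop]; omega), hP,
    D_drop _ (by omega : s + (i - s) < B.length)]
  congr 1
  omega

include hlA hlB hs htA htB hbd in
lemma glue_tspread : TSpread t (A.take s ++ B.drop s) := by
  rw [TSpread, chain'_iff_D, glue_length hlA hlB hs]
  intro i hi
  rcases lt_trichotomy (i+1) s with h | h | h
  · rw [D_glue_lt (i := i) hlA hs (by omega), D_glue_lt (i := i + 1) hlA hs h]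
    exact tspread_D htA (by omega)
  · subst h
    rw [D_glue_lt (i := i) hlA hs (by omega),
      D_glue_ge (i := i + 1) hlA hlB hs (by omega) (by omega)]
    have := hbd (by omega) (by omega)
    rw [show i + 1 - 1 = i by omega] at this
    omega
  · rw [D_glue_ge (i := i) hlA hlB hs (by omega) (by omega),
      D_glue_ge (i := i + 1) hlA hlB hs (by omega) (by omega)]
    exact tspread_D htB (by omega)

include hc hlA hlB hs htA htB hnA hnB hbd in
lemma glue_noRunIdx : NoRunIdx c t (A.take s ++ B.drop s) := by
  intro p hp
  rw [glue_length hlA hlB hs] at hp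
  by_cases h : p + c < s
  · obtain ⟨q, hq, hne⟩ := hnA p (by omega)
    refine ⟨q, hq, ?_⟩
    rwa [D_glue_lt (i := p + q + 1) hlA hs (by omega),
      D_glue_lt (i := p + q) hlA hs (by omega)]
  · by_cases hps : s ≤ p
    · obtain ⟨q, hq, hne⟩ := hnB p (by omega)
      refine ⟨q, hq, ?_⟩
      rwa [D_glue_ge (i := p + q + 1) hlA hlB hs (by omega) (by omega),
        D_glue_ge (i := p + q) hlA hlB hs (by omega) (by omega)]
    · -- p < s ≤ p + c : the gap (s-1, s) is strict
      push_neg at h hps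
      refine ⟨s - 1 - p, by omega, ?_⟩
      rw [show p + (s - 1 - p) + 1 = s by omega, show p + (s - 1 - p) = s - 1 by omega]
      rw [D_glue_lt (i := s - 1) hlA hs (by omega),
        D_glue_ge (i := s) hlA hlB hs (by omega) (by omega)]
      have := hbd (by omega) (by omega)
      omega

include hlA hlB hs htA htB hnA hnB hbd in
lemma glue_mem
    (hbA : ∀ x ∈ A, 1 ≤ x ∧ x ≤ n) (hbB : ∀ x ∈ B, 1 ≤ x ∧ x ≤ n) (hcc : 1 ≤ c) :
    (A.take s ++ B.drop s) ∈ Gen c n d t := by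
  refine ⟨glue_length hlA hlB hs, glue_tspread hlA hlB hs htA htB hbd,
    cBounded_of_idx (glue_noRunIdx hcc hlA hlB hs htA htB hnA hnB hbd), ?_⟩
  intro x hx
  rcases List.mem_append.mp hx with h | h
  · exact hbA x (List.mem_of_mem_take h)
  · exact hbB x (List.mem_of_mem_drop h)

end Glue

/-! ### splitting a list at an index -/

lemma drop_eq_D_cons {L : List ℕ} {p : ℕ} (h : p < L.length) :
    L.drop p = D L p :: L.drop (p+1) := by
  rw [D_get h]
  exact List.drop_eq_getElem_cons h

lemma split_at (L : List ℕ) {p : ℕ} (h : p < L.length) :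
    L = L.take p ++ D L p :: L.drop (p+1) := by
  rw [D_get h, ← List.drop_eq_getElem_cons h, List.take_append_drop]

lemma take_succ_eq (L : List ℕ) {p : ℕ} (h : p < L.length) :
    L.take (p+1) = L.take p ++ [D L p] := by
  rw [List.take_succ, D_get h, List.getElem?_eq_getElem h]
  rfl

/-! ### climbing up to the maximum -/

lemma climb {c n d t : ℕ} (hc : 1 ≤ c) (hd : 1 ≤ d)
    (hgn : ∀ i, i ≤ d - 1 → gfun c t i + 1 ≤ n) :
    ∀ N (L : List ℕ), L ∈ Gen c n d t →
      (∀ i, i < d → D L i ≤ D (MLst c n d t) i) →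
      (∑ i ∈ Finset.range d, (D (MLst c n d t) i - D L i)) ≤ N →
      Relation.ReflTransGen (Covers c n d t) ↑L ↑(MLst c n d t) := by
  intro N
  induction N with
  | zero =>
    intro L hL hle hsum
    have hz : ∀ i ∈ Finset.range d, D (MLst c n d t) i - D L i = 0 := by
      rw [← Finset.sum_eq_zero_iff]
      omega
    have hLM : L = MLst c n d t := by
      apply ext_D (by rw [hL.1, MLst_length])
      intro i hi
      rw [hL.1] at hi
      have h1 := hz i (Finset.mem_range.mpr hi)
      have h2 := hle i hi
      omega
    rw [hLM]
  | succ N ih =>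
    intro L hL hle hsum
    by_cases heq : ∀ i, i < d → D L i = D (MLst c n d t) i
    · have hLM : L = MLst c n d t := by
        apply ext_D (by rw [hL.1, MLst_length])
        intro i hi
        rw [hL.1] at hi
        exact heq i hi
      rw [hLM]
    · push_neg at heq
      obtain ⟨i0, hi0d, hi0⟩ := heq
      have hSne : ((Finset.range d).filter (fun i => D L i < D (MLst c n d t) i)).Nonempty :=
        ⟨i0, Finset.mem_filter.mpr ⟨Finset.mem_range.mpr hi0d,
          lt_of_le_of_ne (hle i0 hi0d) hi0⟩⟩
      set p := ((Finset.range d).filter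
        (fun i => D L i < D (MLst c n d t) i)).max' hSne with hpdef
      have hpS := Finset.max'_mem _ hSne
      rw [← hpdef, Finset.mem_filter, Finset.mem_range] at hpS
      obtain ⟨hpd, hplt⟩ := hpS
      have hgt : ∀ q, p < q → q < d → D L q = D (MLst c n d t) q := by
        intro q hq hqd
        by_contra hne
        have hqS : q ∈ (Finset.range d).filter
            (fun i => D L i < D (MLst c n d t) i) :=
          Finset.mem_filter.mpr ⟨Finset.mem_range.mpr hqd,
            lt_of_le_of_ne (hle q hqd) hne⟩
        have := Finset.le_max' _ q hqS
        omega
      -- glue data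
      have hlL : L.length = d := hL.1
      have htL : TSpread t L := hL.2.1
      have hnL : NoRunIdx c t L := idx_of_cBounded hL.2.1 hL.2.2.1
      have hlM := MLst_length c n d t
      have htM := MLst_tspread hc hd hgn
      have hnM := MLst_noRunIdx hc hd hgn
      have hsp : p ≤ d := by omega
      have hbd : 1 ≤ p → p < d → D L (p-1) + t < D (MLst c n d t) p := by
        intro h1 _
        have := tspread_D htL (i := p - 1) (by omega)
        rw [show p - 1 + 1 = p by omega] at this
        omega
      set L' := L.take p ++ (MLst c n d t).drop p with hL'def
      have hL' : L' ∈ Gen c n d t :=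
        glue_mem hlL hlM hsp htL htM hnL hnM hbd hL.2.2.2 (MLst_bounds hc hd hgn) hc
      have hDlt : ∀ i, i < p → D L' i = D L i := fun i h => D_glue_lt hlL hsp h
      have hDge : ∀ i, p ≤ i → i < d → D L' i = D (MLst c n d t) i :=
        fun i h h2 => D_glue_ge hlL hlM hsp h h2
      -- the covering step
      have hQ : L.drop (p+1) = (MLst c n d t).drop (p+1) := by
        apply ext_D (by rw [List.length_drop, List.length_drop, hlL, hlM])
        intro j hj
        rw [List.length_drop, hlL] at hj
        rw [D_drop _ (by omega), D_drop _ (by rw [hlM]; omega)]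
        exact hgt (p+1+j) (by omega) (by omega)
      have hLsplit : L = L.take p ++ D L p :: (MLst c n d t).drop (p+1) := by
        rw [← hQ]
        exact split_at L (by omega)
      have hL'split : L' = L.take p ++ D (MLst c n d t) p :: (MLst c n d t).drop (p+1) := by
        rw [hL'def, drop_eq_D_cons (by rw [hlM]; omega)]
      have hcov : Covers c n d t ↑L ↑L' := by
        refine ⟨mem_genM_of_gen hL, mem_genM_of_gen hL',
          D L p, D (MLst c n d t) p, hplt, ?_, ?_⟩
        · rw [hL'split]
          rw [Multiset.mem_coe]
          exact List.mem_append_right _ List.mem_cons_self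
        · rw [hL'split, erase_mid]
          conv_lhs => rw [hLsplit]
          exact coe_mid _ _ _
      -- measure decreases
      have hsum' : (∑ i ∈ Finset.range d, (D (MLst c n d t) i - D L' i)) < 
          ∑ i ∈ Finset.range d, (D (MLst c n d t) i - D L i) := by
        apply Finset.sum_lt_sum
        · intro i hi
          rw [Finset.mem_range] at hi
          rcases lt_or_ge i p with h | h
          · rw [hDlt i h]
          · rw [hDge i h hi]
            omega
        · exact ⟨p, Finset.mem_range.mpr hpd, by rw [hDge p le_rfl hpd]; omega⟩
      refine Relation.ReflTransGen.head hcov (ih L' hL' ?_ (by omega))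
      intro i hi
      rcases lt_or_ge i p with h | h
      · rw [hDlt i h]; exact hle i hi
      · rw [hDge i h hi]

/-! ### descending to the minimum -/

lemma descend {c n d t : ℕ} (hc : 1 ≤ c) (hd : 1 ≤ d)
    (hgn : ∀ i, i ≤ d - 1 → gfun c t i + 1 ≤ n) :
    ∀ N (L : List ℕ), L ∈ Gen c n d t →
      (∀ i, i < d → D (mlst c d t) i ≤ D L i) →
      (∑ i ∈ Finset.range d, (D L i - D (mlst c d t) i)) ≤ N →
      Relation.ReflTransGen (Covers c n d t) ↑(mlst c d t) ↑L := by
  intro N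
  induction N with
  | zero =>
    intro L hL hle hsum
    have hz : ∀ i ∈ Finset.range d, D L i - D (mlst c d t) i = 0 := by
      rw [← Finset.sum_eq_zero_iff]
      omega
    have hLM : L = mlst c d t := by
      apply ext_D (by rw [hL.1, mlst_length])
      intro i hi
      rw [hL.1] at hi
      have h1 := hz i (Finset.mem_range.mpr hi)
      have h2 := hle i hi
      omega
    rw [hLM]
  | succ N ih =>
    intro L hL hle hsum
    by_cases heq : ∀ i, i < d → D (mlst c d t) i = D L i
    · have hLM : L = mlst c d t := by
        apply ext_D (by rw [hL.1, mlst_length])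
        intro i hi
        rw [hL.1] at hi
        exact (heq i hi).symm
      rw [hLM]
    · push_neg at heq
      obtain ⟨i0, hi0d, hi0⟩ := heq
      have hSne : ((Finset.range d).filter (fun i => D (mlst c d t) i < D L i)).Nonempty :=
        ⟨i0, Finset.mem_filter.mpr ⟨Finset.mem_range.mpr hi0d,
          lt_of_le_of_ne (hle i0 hi0d) hi0⟩⟩
      set p := ((Finset.range d).filter
        (fun i => D (mlst c d t) i < D L i)).min' hSne with hpdef
      have hpS := Finset.min'_mem _ hSne
      rw [← hpdef, Finset.mem_filter, Finset.mem_range] at hpS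
      obtain ⟨hpd, hplt⟩ := hpS
      have hltq : ∀ q, q < p → D (mlst c d t) q = D L q := by
        intro q hq
        by_contra hne
        have hqS : q ∈ (Finset.range d).filter
            (fun i => D (mlst c d t) i < D L i) :=
          Finset.mem_filter.mpr ⟨Finset.mem_range.mpr (by omega),
            lt_of_le_of_ne (hle q (by omega)) hne⟩
        have := Finset.min'_le _ q hqS
        omega
      have hlL : L.length = d := hL.1
      have htL : TSpread t L := hL.2.1
      have hnL : NoRunIdx c t L := idx_of_cBounded hL.2.1 hL.2.2.1
      have hlm := mlst_length c d t
      have htm : TSpread t (mlst c d t) := mlst_tspread (c := c) (n := n) hc hd hgn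
      have hnm : NoRunIdx c t (mlst c d t) := mlst_noRunIdx (n := n) hc hd hgn
      have hsp : p + 1 ≤ d := by omega
      have hbd : 1 ≤ p + 1 → p + 1 < d → D (mlst c d t) (p+1-1) + t < D L (p+1) := by
        intro _ h2
        have := tspread_D htL (i := p) (by omega)
        rw [show p + 1 - 1 = p by omega]
        omega
      set L'' := (mlst c d t).take (p+1) ++ L.drop (p+1) with hL''def
      have hL'' : L'' ∈ Gen c n d t :=
        glue_mem hlm hlL hsp htm htL hnm hnL hbd (mlst_bounds hc hd hgn) hL.2.2.2 hc
      have hDlt : ∀ i, i < p + 1 → D L'' i = D (mlst c d t) i :=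
        fun i h => D_glue_lt hlm hsp h
      have hDge : ∀ i, p + 1 ≤ i → i < d → D L'' i = D L i :=
        fun i h h2 => D_glue_ge hlm hlL hsp h h2
      -- the covering step
      have hPeq : L.take p = (mlst c d t).take p := by
        apply ext_D (by rw [List.length_take, List.length_take, hlL, hlm])
        intro j hj
        rw [List.length_take, hlL] at hj
        rw [D_take _ (by omega) (by omega), D_take _ (by omega) (by omega)]
        exact (hltq j (by omega)).symm
      have hLsplit : L = (mlst c d t).take p ++ D L p :: L.drop (p+1) := by
        rw [← hPeq]
        exact split_at L (by omega)
      obtain ⟨j0, hj0⟩ : ∃ j0, j0 = D L p := ⟨_, rfl⟩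
      rw [← hj0] at hLsplit hplt
      have hL''split : L'' = (mlst c d t).take p ++ D (mlst c d t) p :: L.drop (p+1) := by
        rw [hL''def, take_succ_eq (mlst c d t) (p := p) (by rw [hlm]; omega)]
        simp [List.append_assoc]
      have hcov : Covers c n d t ↑L'' ↑L := by
        refine ⟨mem_genM_of_gen hL'', mem_genM_of_gen hL,
          D (mlst c d t) p, j0, hplt, ?_, ?_⟩
        · rw [Multiset.mem_coe, hj0]
          exact mem_of_D (by omega)
        · have herase : (↑L : Multiset ℕ).erase j0 =
              ↑((mlst c d t).take p ++ L.drop (p+1)) := by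
            conv_lhs => rw [hLsplit]
            rw [erase_mid]
          rw [herase, hL''split]
          exact coe_mid _ _ _
      -- measure decreases
      have hsum' : (∑ i ∈ Finset.range d, (D L'' i - D (mlst c d t) i)) < 
          ∑ i ∈ Finset.range d, (D L i - D (mlst c d t) i) := by
        apply Finset.sum_lt_sum
        · intro i hi
          rw [Finset.mem_range] at hi
          rcases lt_or_ge i (p+1) with h | h
          · rw [hDlt i h]
            omega
          · rw [hDge i h hi]
        · refine ⟨p, Finset.mem_range.mpr hpd, ?_⟩
          rw [hDlt p (by omega)]
          omega
      refine Relation.ReflTransGen.tail (ih L'' hL'' ?_ (by omega)) hcov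
      intro i hi
      rcases lt_or_ge i (p+1) with h | h
      · rw [hDlt i h]
      · rw [hDge i h hi]; exact hle i hi

end S9

open S9

/-- Write `d = kc + r`, `0 < r ≤ c` (so `k = ⌊(d-1)/c⌋`).
The generators of `I_{c,(n,d,t)}`, partially ordered by the transitive
closure of the covering relation, have a unique maximal element
`x_{a₁}⋯x_{a_d}` with `a_{d-i+1} = n - (i-1)t - ⌊(i-1)/c⌋` and a unique
minimal element `x_{α₁}⋯x_{α_d}` with `α_i = (i-1)t + ⌊(i-1)/c⌋ + 1`;
indeed the former is the greatest and the latter the least element. -/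
theorem stmt_9 (c n d t k r : ℕ) (hc : 1 ≤ c) (hd : 1 ≤ d)
    (hdk : d = k * c + r) (hr1 : 0 < r) (hr2 : r ≤ c)
    (hn : k + t * (d - 1) + 1 ≤ n)
    (M m0 : Multiset ℕ)
    (hM : M = ↑((List.range d).map fun i => n - (d - 1 - i) * t - (d - 1 - i) / c))
    (hm0 : m0 = ↑((List.range d).map fun i => i * t + i / c + 1)) :
    M ∈ GenM c n d t ∧
    (∀ u ∈ GenM c n d t, Relation.ReflTransGen (Covers c n d t) u M) ∧
    m0 ∈ GenM c n d t ∧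
    (∀ u ∈ GenM c n d t, Relation.ReflTransGen (Covers c n d t) m0 u) := by
  have hMeq : M = ↑(MLst c n d t) := hM
  have hm0eq : m0 = ↑(mlst c d t) := hm0
  have hk : (d - 1) / c = k := by
    rw [show d - 1 = r - 1 + k * c by omega, Nat.add_mul_div_right _ _ (by omega : 0 < c),
      Nat.div_eq_of_lt (by omega)]
    omega
  have hgn : ∀ i, i ≤ d - 1 → gfun c t i + 1 ≤ n := by
    intro i hi
    have h1 : gfun c t i ≤ gfun c t (d - 1) := gfun_mono hi
    have h2 : gfun c t (d - 1) = (d - 1) * t + k := by rw [gfun, hk]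
    have h3 : (d - 1) * t = t * (d - 1) := Nat.mul_comm _ _
    omega
  refine ⟨?_, ?_, ?_, ?_⟩
  · rw [hMeq]
    exact mem_genM_of_gen (MLst_mem hc hd hgn)
  · intro u hu
    have hGen : Multiset.sort u (· ≤ ·) ∈ Gen c n d t := hu
    have hueq : u = ↑(Multiset.sort u (· ≤ ·)) := (Multiset.sort_eq u _).symm
    set L := Multiset.sort u (· ≤ ·) with hLdef
    have hlL : L.length = d := hGen.1
    have htL : TSpread t L := hGen.2.1
    have hnL : NoRunIdx c t L := idx_of_cBounded hGen.2.1 hGen.2.2.1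
    have hUB : ∀ i, i < d → D L i ≤ D (MLst c n d t) i := by
      intro i hi
      rw [D_MLst hi]
      have h1 := key_lb hc htL hnL (d - 1 - i) i (by omega)
      rw [show i + (d - 1 - i) = d - 1 by omega] at h1
      have h2 := (hGen.2.2.2 (D L (d-1)) (mem_of_D (by omega))).2
      omega
    rw [hueq, hMeq]
    exact climb hc hd hgn _ L hGen hUB le_rfl
  · rw [hm0eq]
    exact mem_genM_of_gen (mlst_mem hc hd hgn)
  · intro u hu
    have hGen : Multiset.sort u (· ≤ ·) ∈ Gen c n d t := hu
    have hueq : u = ↑(Multiset.sort u (· ≤ ·)) := (Multiset.sort_eq u _).symm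
    set L := Multiset.sort u (· ≤ ·) with hLdef
    have hlL : L.length = d := hGen.1
    have htL : TSpread t L := hGen.2.1
    have hnL : NoRunIdx c t L := idx_of_cBounded hGen.2.1 hGen.2.2.1
    have hLB : ∀ i, i < d → D (mlst c d t) i ≤ D L i := by
      intro i hi
      rw [D_mlst hi]
      have h1 := key_lb hc htL hnL i 0 (by omega)
      rw [show 0 + i = i by omega] at h1
      have h2 := (hGen.2.2.2 (D L 0) (mem_of_D (by omega))).1
      omega
    rw [hueq, hm0eq]
    exact descend hc hd hgn _ L hGen hLB le_rfl
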